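/- Let λ be a partition with outer corners M₁, …, M_d and inner corners N₁, …, N_{d−1} (ordered by increasing row index), and set x_i = c(M_i) and y_i = c(N_i), so that x₁ > y₁ > x₂ > y₂ > ⋯ > y_{d−1} > x_d. For 1 ≤ k ≤ d, let λ⁺ be the partition obtained from λ by adding the outer corner M_k. Then in the field ℚ(q), w(λ⁺) / (w(λ) · w(1)) = ( ∏_{i=1}^{k−1} w(x_i − x_k) / ∏_{i=1}^{k−1} w(y_i − x_k) ) · ( ∏_{i=k+1}^{d} w(x_k − x_i) / ∏_{i=k}^{d−1} w(x_k − y_i) ). -/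

import Mathlib

open scoped BigOperators

/-- Hook length of the cell `c` in the Young diagram `Y` (0-indexed cells). -/
def hook (Y : YoungDiagram) (c : ℕ × ℕ) : ℕ :=
  Y.rowLen c.1 + Y.colLen c.2 - c.1 - c.2 - 1

/-- `w h = (1 + q^h) / (1 - q^h)` in `ℚ(q)`, where `q = RatFunc.X`. -/
noncomputable def w (h : ℤ) : RatFunc ℚ :=
  (1 + RatFunc.X ^ h) / (1 - RatFunc.X ^ h)

/-- `w(λ) = ∏_{x ∈ λ} w(h(x))`. -/
noncomputable def wD (Y : YoungDiagram) : RatFunc ℚ :=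
  ∏ c ∈ Y.cells, w (hook Y c)

lemma intDegree_inv (x : RatFunc ℚ) (hx : x ≠ 0) : (x⁻¹).intDegree = - x.intDegree := by
  have h := RatFunc.intDegree_mul (inv_ne_zero hx) hx
  rw [inv_mul_cancel₀ hx, RatFunc.intDegree_one] at h
  linarith

lemma intDegree_X_pow (n : ℕ) : ((RatFunc.X : RatFunc ℚ) ^ n).intDegree = n := by
  induction n with
  | zero => simp
  | succ m ih =>
      rw [pow_succ, RatFunc.intDegree_mul (pow_ne_zero _ RatFunc.X_ne_zero) RatFunc.X_ne_zero,
        ih, RatFunc.intDegree_X]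
      push_cast; ring

lemma intDegree_X_zpow (h : ℤ) : ((RatFunc.X : RatFunc ℚ) ^ h).intDegree = h := by
  cases h with
  | ofNat n => rw [Int.ofNat_eq_coe, zpow_natCast, intDegree_X_pow]
  | negSucc n =>
      rw [zpow_negSucc, intDegree_inv _ (pow_ne_zero _ RatFunc.X_ne_zero), intDegree_X_pow]
      simp [Int.negSucc_eq]

lemma X_zpow_ne_one {h : ℤ} (hh : h ≠ 0) : (RatFunc.X : RatFunc ℚ) ^ h ≠ 1 := by
  intro he
  have := intDegree_X_zpow h
  rw [he, RatFunc.intDegree_one] at this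
  exact hh this.symm

lemma X_zpow_ne_neg_one {h : ℤ} (hh : h ≠ 0) : (RatFunc.X : RatFunc ℚ) ^ h ≠ -1 := by
  intro he
  have := intDegree_X_zpow h
  rw [he, RatFunc.intDegree_neg, RatFunc.intDegree_one] at this
  exact hh this.symm

lemma w_num_ne_zero {h : ℤ} (hh : h ≠ 0) : (1 + RatFunc.X ^ h : RatFunc ℚ) ≠ 0 := by
  intro he
  exact X_zpow_ne_neg_one hh (by linear_combination he)

lemma w_den_ne_zero {h : ℤ} (hh : h ≠ 0) : (1 - RatFunc.X ^ h : RatFunc ℚ) ≠ 0 := by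
  intro he
  exact X_zpow_ne_one hh (by linear_combination -he)

lemma w_ne_zero {h : ℤ} (hh : h ≠ 0) : w h ≠ 0 :=
  div_ne_zero (w_num_ne_zero hh) (w_den_ne_zero hh)


namespace YoungDiagram

lemma outer_iff {Y : YoungDiagram} {c : ℕ × ℕ} :
    (c ∉ Y.cells ∧ IsLowerSet (insert c ↑Y.cells : Set (ℕ × ℕ))) ↔
      c.2 = Y.rowLen c.1 ∧ c.1 = Y.colLen c.2 := by
  obtain ⟨i, j⟩ := c
  dsimp only
  constructor
  · rintro ⟨hc, hl⟩
    rw [mem_cells, mem_iff_lt_rowLen, not_lt] at hc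
    have hrow : j ≤ Y.rowLen i := by
      rcases Nat.eq_zero_or_pos j with hj | hj
      · omega
      · have : ((i, j - 1) : ℕ × ℕ) ∈ insert ((i, j) : ℕ × ℕ) (↑Y.cells : Set (ℕ × ℕ)) :=
          hl (Prod.mk_le_mk.mpr ⟨by omega, by omega⟩) (Set.mem_insert _ _)
        rcases this with h | h
        · rw [Prod.mk.injEq] at h; omega
        · rw [Finset.mem_coe, mem_cells, mem_iff_lt_rowLen] at h
          omega
    have hcol1 : i ≤ Y.colLen j := by
      rcases Nat.eq_zero_or_pos i with hi | hi
      · omega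
      · have : ((i - 1, j) : ℕ × ℕ) ∈ insert ((i, j) : ℕ × ℕ) (↑Y.cells : Set (ℕ × ℕ)) :=
          hl (Prod.mk_le_mk.mpr ⟨by omega, by omega⟩) (Set.mem_insert _ _)
        rcases this with h | h
        · rw [Prod.mk.injEq] at h; omega
        · rw [Finset.mem_coe, mem_cells, mem_iff_lt_colLen] at h
          omega
    have hcol2 : Y.colLen j ≤ i := by
      by_contra h
      push_neg at h
      have : (i, j) ∈ Y := mem_iff_lt_colLen.2 h
      rw [mem_iff_lt_rowLen] at this
      omega
    exact ⟨by omega, by omega⟩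
  · rintro ⟨h1, h2⟩
    constructor
    · rw [mem_cells, mem_iff_lt_rowLen]; omega
    · rintro ⟨a, b⟩ ⟨p, q⟩ hle hq
      rw [Prod.mk_le_mk] at hle
      rcases hq with hq | hq
      · rw [Prod.mk.injEq] at hq
        obtain ⟨ha, hb⟩ := hq
        subst ha; subst hb
        by_cases hpq : p = a ∧ q = b
        · exact hpq.1 ▸ hpq.2 ▸ Set.mem_insert _ _
        · refine Set.mem_insert_of_mem _ ?_
          rw [Finset.mem_coe, mem_cells]
          rcases Nat.lt_or_ge q b with h | h
          · rw [mem_iff_lt_rowLen]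
            have := Y.rowLen_anti p a hle.1
            omega
          · rw [mem_iff_lt_colLen]
            have hq : q = b := by omega
            subst hq
            have hp : p < a := by
              rcases Nat.lt_or_ge p a with h' | h'
              · exact h'
              · exact absurd ⟨by omega, rfl⟩ hpq
            omega
      · exact Set.mem_insert_of_mem _ (Y.isLowerSet (Prod.mk_le_mk.mpr hle) hq)

lemma inner_iff {Y : YoungDiagram} {c : ℕ × ℕ} :
    (c ∈ Y.cells ∧ IsLowerSet (↑(Y.cells.erase c) : Set (ℕ × ℕ))) ↔
      c.2 + 1 = Y.rowLen c.1 ∧ c.1 + 1 = Y.colLen c.2 := by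
  obtain ⟨i, j⟩ := c
  dsimp only
  constructor
  · rintro ⟨hc, hl⟩
    rw [mem_cells, mem_iff_lt_rowLen] at hc
    have hc' : i < Y.colLen j := mem_iff_lt_colLen.1 (mem_iff_lt_rowLen.2 hc)
    have hrow : Y.rowLen i ≤ j + 1 := by
      by_contra h
      push_neg at h
      have hin : ((i, j + 1) : ℕ × ℕ) ∈ (↑(Y.cells.erase (i, j)) : Set (ℕ × ℕ)) := by
        rw [Finset.mem_coe, Finset.mem_erase]
        refine ⟨by simp, ?_⟩
        rw [mem_cells, mem_iff_lt_rowLen]; omega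
      have h5 : ((i, j) : ℕ × ℕ) ∈ (↑(Y.cells.erase (i, j)) : Set (ℕ × ℕ)) :=
        hl (Prod.mk_le_mk.mpr ⟨le_refl i, by omega⟩) hin
      rw [Finset.mem_coe, Finset.mem_erase] at h5
      exact h5.1 rfl
    have hcol : Y.colLen j ≤ i + 1 := by
      by_contra h
      push_neg at h
      have hin : ((i + 1, j) : ℕ × ℕ) ∈ (↑(Y.cells.erase (i, j)) : Set (ℕ × ℕ)) := by
        rw [Finset.mem_coe, Finset.mem_erase]
        refine ⟨by simp, ?_⟩
        rw [mem_cells, mem_iff_lt_colLen]; omega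
      have h5 : ((i, j) : ℕ × ℕ) ∈ (↑(Y.cells.erase (i, j)) : Set (ℕ × ℕ)) :=
        hl (Prod.mk_le_mk.mpr ⟨by omega, le_refl j⟩) hin
      rw [Finset.mem_coe, Finset.mem_erase] at h5
      exact h5.1 rfl
    exact ⟨by omega, by omega⟩
  · rintro ⟨h1, h2⟩
    refine ⟨by rw [mem_cells, mem_iff_lt_rowLen]; omega, ?_⟩
    rintro ⟨a, b⟩ ⟨p, q⟩ hle hq
    rw [Prod.mk_le_mk] at hle
    rw [Finset.mem_coe, Finset.mem_erase] at hq ⊢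
    obtain ⟨hq1, hq2⟩ := hq
    rw [mem_cells] at hq2
    have hb : b < Y.rowLen a := mem_iff_lt_rowLen.1 hq2
    have ha : a < Y.colLen b := mem_iff_lt_colLen.1 hq2
    constructor
    · rintro hpq
      apply hq1
      rw [Prod.mk.injEq] at hpq
      obtain ⟨hp, hq'⟩ := hpq
      subst hp; subst hq'
      have h3 : Y.rowLen a ≤ Y.rowLen p := Y.rowLen_anti _ _ hle.1
      have h4 : Y.colLen b ≤ Y.colLen q := Y.colLen_anti _ _ hle.2
      rw [Prod.mk.injEq]
      omega
    · have : ((p, q) : ℕ × ℕ) ∈ (↑Y.cells : Set (ℕ × ℕ)) :=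
        Y.isLowerSet (Prod.mk_le_mk.mpr hle) (Finset.mem_coe.2 ((mem_cells _).2 hq2))
      exact Finset.mem_coe.1 this

end YoungDiagram


open YoungDiagram

section Interleave

variable (Y : YoungDiagram) {d : ℕ}
  (M : Fin d → ℕ × ℕ) (N : Fin (d - 1) → ℕ × ℕ)

lemma colLen_rowLen_le (r : ℕ) : Y.colLen (Y.rowLen r) ≤ r := by
  by_contra h
  push_neg at h
  have := mem_iff_lt_colLen.2 h
  rw [mem_iff_lt_rowLen] at this
  omega

lemma M_row_succ
    (hM : Set.range M =
      {c : ℕ × ℕ | c ∉ Y.cells ∧ IsLowerSet (insert c ↑Y.cells : Set (ℕ × ℕ))})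
    (hMmono : StrictMono fun i => (M i).1)
    (hN : Set.range N =
      {c : ℕ × ℕ | c ∈ Y.cells ∧ IsLowerSet (↑(Y.cells.erase c) : Set (ℕ × ℕ))})
    (hNmono : StrictMono fun i => (N i).1) (hd : 1 ≤ d) :
    (∀ i : Fin (d - 1), (M ⟨(i : ℕ) + 1, by omega⟩).1 = (N i).1 + 1) := by
  -- outer corners are determined by their rows
  have hMouter : ∀ i, ((M i).2 = Y.rowLen (M i).1 ∧ (M i).1 = Y.colLen (M i).2) := by
    intro i
    have : M i ∈ Set.range M := Set.mem_range_self i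
    rw [hM] at this
    exact outer_iff.1 this
  have hNinner : ∀ i, ((N i).2 + 1 = Y.rowLen (N i).1 ∧ (N i).1 + 1 = Y.colLen (N i).2) := by
    intro i
    have : N i ∈ Set.range N := Set.mem_range_self i
    rw [hN] at this
    exact inner_iff.1 this
  set f : Fin d → ℕ := fun i => (M i).1 with hf
  set g : Fin d → ℕ := fun i => if h : (i : ℕ) = 0 then 0 else (N ⟨(i : ℕ) - 1, by omega⟩).1 + 1
    with hg
  have hgmono : StrictMono g := by
    intro a b hab
    rw [Fin.lt_def] at hab
    rcases Nat.eq_zero_or_pos (a : ℕ) with ha | ha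
    · have hb : 0 < (b : ℕ) := by omega
      show (if h : (a : ℕ) = 0 then 0 else (N ⟨(a : ℕ) - 1, by omega⟩).1 + 1) <
        (if h : (b : ℕ) = 0 then 0 else (N ⟨(b : ℕ) - 1, by omega⟩).1 + 1)
      rw [dif_pos ha, dif_neg hb.ne']
      omega
    · have hb : 0 < (b : ℕ) := by omega
      show (if h : (a : ℕ) = 0 then 0 else (N ⟨(a : ℕ) - 1, by omega⟩).1 + 1) <
        (if h : (b : ℕ) = 0 then 0 else (N ⟨(b : ℕ) - 1, by omega⟩).1 + 1)
      rw [dif_neg ha.ne', dif_neg hb.ne']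
      exact Nat.succ_lt_succ (hNmono (show (⟨(a : ℕ) - 1, by omega⟩ : Fin (d - 1)) <
        ⟨(b : ℕ) - 1, by omega⟩ by rw [Fin.lt_def]; dsimp; omega))
  -- range g ⊆ range f
  have hsub : ∀ i, g i ∈ Finset.univ.image f := by
    intro i
    rcases Nat.eq_zero_or_pos (i : ℕ) with hi | hi
    · -- 0 is an outer-corner row
      have h0 : ((0, Y.rowLen 0) : ℕ × ℕ) ∈ Set.range M := by
        rw [hM]
        rw [Set.mem_setOf_eq, outer_iff]
        exact ⟨rfl, Nat.le_zero.1 (colLen_rowLen_le Y 0) |>.symm⟩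
      obtain ⟨j, hj⟩ := h0
      rw [Finset.mem_image]
      refine ⟨j, Finset.mem_univ _, ?_⟩
      show (M j).1 = g i
      rw [hj]
      show 0 = if h : (i : ℕ) = 0 then 0 else (N ⟨(i : ℕ) - 1, by omega⟩).1 + 1
      rw [dif_pos hi]
    · set i' : Fin (d - 1) := ⟨(i : ℕ) - 1, by omega⟩ with hi'
      set s := (N i').1 with hs
      set t := (N i').2 with ht
      obtain ⟨hN1, hN2⟩ := hNinner i'
      rw [← hs, ← ht] at hN1 hN2
      -- row s+1 is an outer-corner row
      have hout : ((s + 1, Y.rowLen (s + 1)) : ℕ × ℕ) ∈ Set.range M := by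
        rw [hM, Set.mem_setOf_eq, outer_iff]
        refine ⟨rfl, ?_⟩
        show s + 1 = Y.colLen (Y.rowLen (s + 1))
        have hle : Y.colLen (Y.rowLen (s + 1)) ≤ s + 1 := colLen_rowLen_le Y (s + 1)
        have h1 : Y.rowLen (s + 1) ≤ t := by
          have : ((s + 1, t) : ℕ × ℕ) ∉ Y := by
            rw [mem_iff_lt_colLen]; omega
          rw [mem_iff_lt_rowLen] at this; omega
        have h2 : ((s, Y.rowLen (s + 1)) : ℕ × ℕ) ∈ Y := by
          rw [mem_iff_lt_rowLen]; omega
        rw [mem_iff_lt_colLen] at h2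
        omega
      obtain ⟨j, hj⟩ := hout
      rw [Finset.mem_image]
      refine ⟨j, Finset.mem_univ _, ?_⟩
      show (M j).1 = g i
      rw [hj]
      show s + 1 = if h : (i : ℕ) = 0 then 0 else (N ⟨(i : ℕ) - 1, by omega⟩).1 + 1
      rw [dif_neg hi.ne']
  have hcard : (Finset.univ.image f).card = d := by
    rw [Finset.card_image_of_injective _ hMmono.injective, Finset.card_univ, Fintype.card_fin]
  have hfeq : f = (Finset.univ.image f).orderEmbOfFin hcard :=
    Finset.orderEmbOfFin_unique hcard (fun x => Finset.mem_image_of_mem f (Finset.mem_univ x))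
      hMmono
  have hgeq : g = (Finset.univ.image f).orderEmbOfFin hcard :=
    Finset.orderEmbOfFin_unique hcard hsub hgmono
  have hfg : f = g := hfeq.trans hgeq.symm
  intro i
  have h9 := congrFun hfg ⟨(i : ℕ) + 1, by omega⟩
  have h10 : g ⟨(i : ℕ) + 1, by omega⟩ = (N i).1 + 1 := by
    show (if h : ((i : ℕ) + 1) = 0 then 0 else (N ⟨(i : ℕ) + 1 - 1, by omega⟩).1 + 1) = _
    rw [dif_neg (Nat.succ_ne_zero _)]
    congr 1
  exact h9.trans h10

end Interleave


lemma telescope (L : ℕ → ℕ) (hanti : ∀ {j1 j2 : ℕ}, j1 ≤ j2 → L j2 ≤ L j1) (cc r : ℕ)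
    (hL : ∀ j < cc, r + 1 ≤ L j) (hcc : L cc = r) :
    ∏ j ∈ Finset.range cc,
        (w ((cc : ℤ) - j + L j - r) / w ((cc : ℤ) - j + L j - r - 1)) =
      (∏ j ∈ (Finset.range cc).filter (fun j => j = 0 ∨ L j < L (j - 1)),
          w ((cc : ℤ) - j + L j - r)) /
        ∏ j ∈ (Finset.Icc 1 cc).filter (fun j => L j < L (j - 1)),
          w ((cc : ℤ) - j + L (j - 1) - r) := by
  rw [Finset.prod_div_distrib]
  have hden : ∏ j ∈ Finset.range cc, w ((cc : ℤ) - j + L j - r - 1) =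
      ∏ j ∈ Finset.Icc 1 cc, w ((cc : ℤ) - j + L (j - 1) - r) := by
    refine Finset.prod_nbij' (fun j => j + 1) (fun j => j - 1) ?_ ?_ ?_ ?_ ?_
    · intro a ha
      rw [Finset.mem_range] at ha
      rw [Finset.mem_Icc]
      omega
    · intro a ha
      rw [Finset.mem_Icc] at ha
      rw [Finset.mem_range]
      omega
    · intro a _; omega
    · intro a ha
      rw [Finset.mem_Icc] at ha
      omega
    · intro a ha
      rw [Finset.mem_range] at ha
      have h1 : a + 1 - 1 = a := by omega
      rw [h1]
      congr 1
      push_cast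
      ring
  rw [hden]
  rw [← Finset.prod_filter_mul_prod_filter_not (Finset.range cc)
    (fun j => j = 0 ∨ L j < L (j - 1)) (fun j => w ((cc : ℤ) - j + L j - r))]
  rw [← Finset.prod_filter_mul_prod_filter_not (Finset.Icc 1 cc)
    (fun j => L j < L (j - 1)) (fun j => w ((cc : ℤ) - j + L (j - 1) - r))]
  have hCeq : (Finset.range cc).filter (fun j => ¬(j = 0 ∨ L j < L (j - 1))) =
      (Finset.Icc 1 cc).filter (fun j => ¬ L j < L (j - 1)) := by
    ext j
    simp only [Finset.mem_filter, Finset.mem_range, Finset.mem_Icc, not_or, not_lt]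
    constructor
    · rintro ⟨hj, hj0, hjL⟩
      exact ⟨⟨by omega, by omega⟩, hjL⟩
    · rintro ⟨⟨hj1, hj2⟩, hjL⟩
      have hjcc : j ≠ cc := by
        rintro rfl
        have := hL (j - 1) (by omega)
        have h2 := hanti (show j - 1 ≤ j by omega)
        omega
      exact ⟨by omega, by omega, hjL⟩
  have hCcong : ∏ j ∈ (Finset.range cc).filter (fun j => ¬(j = 0 ∨ L j < L (j - 1))),
      w ((cc : ℤ) - j + L j - r) =
      ∏ j ∈ (Finset.Icc 1 cc).filter (fun j => ¬ L j < L (j - 1)),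
        w ((cc : ℤ) - j + L (j - 1) - r) := by
    rw [← hCeq]
    refine Finset.prod_congr rfl ?_
    intro j hj
    rw [Finset.mem_filter, Finset.mem_range, not_or, not_lt] at hj
    have h2 := hanti (show j - 1 ≤ j by omega)
    have : L (j - 1) = L j := by omega
    rw [this]
  rw [hCcong]
  have hCne : ∏ j ∈ (Finset.Icc 1 cc).filter (fun j => ¬ L j < L (j - 1)),
      w ((cc : ℤ) - j + L (j - 1) - r) ≠ 0 := by
    rw [Finset.prod_ne_zero_iff]
    intro j hj
    rw [Finset.mem_filter, Finset.mem_Icc, not_lt] at hj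
    obtain ⟨⟨hj1, hj2⟩, hjL⟩ := hj
    have hjcc : j ≠ cc := by
      rintro rfl
      have := hL (j - 1) (by omega)
      have h2 := hanti (show j - 1 ≤ j by omega)
      omega
    have := hL j (by omega)
    apply w_ne_zero
    have h3 : (L j : ℤ) ≤ L (j - 1) := by exact_mod_cast hanti (show j - 1 ≤ j by omega)
    push_cast
    omega
  rw [mul_div_mul_right _ _ hCne]


lemma rowLen_eq_of (μ : YoungDiagram) (i n : ℕ) (h1 : ∀ j < n, (i, j) ∈ μ)
    (h2 : (i, n) ∉ μ) : μ.rowLen i = n := by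
  rw [mem_iff_lt_rowLen, not_lt] at h2
  rcases Nat.eq_zero_or_pos n with hn | hn
  · omega
  · have := mem_iff_lt_rowLen.1 (h1 (n - 1) (by omega))
    omega

lemma colLen_eq_of (μ : YoungDiagram) (j n : ℕ) (h1 : ∀ i < n, (i, j) ∈ μ)
    (h2 : (n, j) ∉ μ) : μ.colLen j = n := by
  rw [mem_iff_lt_colLen, not_lt] at h2
  rcases Nat.eq_zero_or_pos n with hn | hn
  · omega
  · have := mem_iff_lt_colLen.1 (h1 (n - 1) (by omega))
    omega


/-- Let `λ` have outer corners `M₁, …, M_d` (cells outside `λ` whose addition yields a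
Young diagram) and inner corners `N₁, …, N_{d−1}` (cells of `λ` whose removal yields a
Young diagram), both ordered by increasing row index, with contents `xᵢ = c(Mᵢ)`,
`yᵢ = c(Nᵢ)`.  If `λ⁺` is obtained from `λ` by adding the outer corner `M_k`, then
`w(λ⁺)/(w(λ)·w(1)) = (∏_{i<k} w(xᵢ−xₖ)/∏_{i<k} w(yᵢ−xₖ))·(∏_{i>k} w(xₖ−xᵢ)/∏_{i≥k} w(xₖ−yᵢ))`
(indices `0`-based here, `1`-based in the paper). -/
theorem add_corner_weight (Y : YoungDiagram) (d : ℕ) (hd : 1 ≤ d)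
    (M : Fin d → ℕ × ℕ) (N : Fin (d - 1) → ℕ × ℕ)
    (hM : Set.range M =
      {c : ℕ × ℕ | c ∉ Y.cells ∧ IsLowerSet (insert c ↑Y.cells : Set (ℕ × ℕ))})
    (hMmono : StrictMono fun i => (M i).1)
    (hN : Set.range N =
      {c : ℕ × ℕ | c ∈ Y.cells ∧ IsLowerSet (↑(Y.cells.erase c) : Set (ℕ × ℕ))})
    (hNmono : StrictMono fun i => (N i).1)
    (x : Fin d → ℤ) (hx : ∀ i, x i = ((M i).2 : ℤ) - ((M i).1 : ℤ))
    (y : Fin (d - 1) → ℤ) (hy : ∀ i, y i = ((N i).2 : ℤ) - ((N i).1 : ℤ))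
    (k : Fin d) (Z : YoungDiagram) (hZ : Z.cells = insert (M k) Y.cells) :
    wD Z / (wD Y * w 1) =
      ((∏ i ∈ Finset.univ.filter (fun i : Fin d => i < k), w (x i - x k)) /
          ∏ i ∈ Finset.univ.filter (fun i : Fin (d - 1) => (i : ℕ) < (k : ℕ)),
            w (y i - x k)) *
        ((∏ i ∈ Finset.univ.filter (fun i : Fin d => k < i), w (x k - x i)) /
          ∏ i ∈ Finset.univ.filter (fun i : Fin (d - 1) => (k : ℕ) ≤ (i : ℕ)),
            w (x k - y i)) := by
  -- notation
  set r := (M k).1 with hr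
  set cc := (M k).2 with hcc
  -- basic corner facts
  have hMouter : ∀ i, ((M i).2 = Y.rowLen (M i).1 ∧ (M i).1 = Y.colLen (M i).2) := by
    intro i
    have : M i ∈ Set.range M := Set.mem_range_self i
    rw [hM] at this
    exact outer_iff.1 this
  have hNinner : ∀ i, ((N i).2 + 1 = Y.rowLen (N i).1 ∧ (N i).1 + 1 = Y.colLen (N i).2) := by
    intro i
    have : N i ∈ Set.range N := Set.mem_range_self i
    rw [hN] at this
    exact inner_iff.1 this
  have hMsurj : ∀ c : ℕ × ℕ, c.2 = Y.rowLen c.1 → c.1 = Y.colLen c.2 → ∃ i, M i = c := by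
    intro c h1 h2
    have : c ∈ Set.range M := by rw [hM]; exact outer_iff.2 ⟨h1, h2⟩
    exact this
  have hNsurj : ∀ c : ℕ × ℕ, c.2 + 1 = Y.rowLen c.1 → c.1 + 1 = Y.colLen c.2 → ∃ i, N i = c := by
    intro c h1 h2
    have : c ∈ Set.range N := by rw [hN]; exact inner_iff.2 ⟨h1, h2⟩
    exact this
  have hrcc : cc = Y.rowLen r := (hMouter k).1
  have hccr : r = Y.colLen cc := (hMouter k).2
  have hinterleave := M_row_succ Y M N hM hMmono hN hNmono hd
  -- N-row positions vs k
  have hNge : ∀ i : Fin (d - 1), ((k : ℕ) ≤ (i : ℕ) ↔ r ≤ (N i).1) := by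
    intro i
    have hlt : (i : ℕ) + 1 < d := by have := i.isLt; omega
    have h1 := hinterleave i
    constructor
    · intro h
      have : k < (⟨(i : ℕ) + 1, by omega⟩ : Fin d) := by rw [Fin.lt_def]; dsimp; omega
      have := hMmono this
      dsimp at this
      omega
    · intro h
      by_contra hc
      push_neg at hc
      have : (⟨(i : ℕ) + 1, by omega⟩ : Fin d) ≤ k := by rw [Fin.le_def]; dsimp; omega
      have := hMmono.monotone this
      omega
  -- mem of Z
  have memZ : ∀ p : ℕ × ℕ, p ∈ Z ↔ p = (r, cc) ∨ p ∈ Y := by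
    intro p
    rw [← mem_cells, hZ, Finset.mem_insert, mem_cells]
  have hMknotY : (r, cc) ∉ Y := by rw [mem_iff_lt_rowLen]; omega
  -- Z row and col lengths
  have zRow : ∀ i, Z.rowLen i = if i = r then cc + 1 else Y.rowLen i := by
    intro i
    by_cases hi : i = r
    · subst hi
      rw [if_pos rfl]
      apply rowLen_eq_of
      · intro j hj
        rw [memZ]
        rcases Nat.lt_or_ge j cc with h | h
        · right; rw [mem_iff_lt_rowLen]; omega
        · left; have : j = cc := by omega
          rw [this]
      · rw [memZ]
        push_neg
        constructor
        · intro h; exact absurd (congrArg Prod.snd h) (by dsimp; omega)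
        · rw [mem_iff_lt_rowLen]; omega
    · rw [if_neg hi]
      apply rowLen_eq_of
      · intro j hj
        rw [memZ]; right; rw [mem_iff_lt_rowLen]; exact hj
      · rw [memZ]
        push_neg
        constructor
        · intro h; exact absurd (congrArg Prod.fst h) (by dsimp; omega)
        · rw [mem_iff_lt_rowLen]; omega
  have zCol : ∀ j, Z.colLen j = if j = cc then r + 1 else Y.colLen j := by
    intro j
    by_cases hj : j = cc
    · subst hj
      rw [if_pos rfl]
      apply colLen_eq_of
      · intro i hi
        rw [memZ]
        rcases Nat.lt_or_ge i r with h | h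
        · right; rw [mem_iff_lt_colLen]; omega
        · left; have : i = r := by omega
          rw [this]
      · rw [memZ]
        push_neg
        constructor
        · intro h; exact absurd (congrArg Prod.fst h) (by dsimp; omega)
        · rw [mem_iff_lt_colLen]; omega
    · rw [if_neg hj]
      apply colLen_eq_of
      · intro i hi
        rw [memZ]; right; rw [mem_iff_lt_colLen]; exact hi
      · rw [memZ]
        push_neg
        constructor
        · intro h; exact absurd (congrArg Prod.snd h) (by dsimp; omega)
        · rw [mem_iff_lt_colLen]; omega
  -- telescope side conditions
  have hLrow : ∀ j < cc, r + 1 ≤ Y.colLen j := by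
    intro j hj
    have : (r, j) ∈ Y := by rw [mem_iff_lt_rowLen]; omega
    rw [mem_iff_lt_colLen] at this
    omega
  have hRcol : ∀ i < r, cc + 1 ≤ Y.rowLen i := by
    intro i hi
    have : (i, cc) ∈ Y := by rw [mem_iff_lt_colLen]; omega
    rw [mem_iff_lt_rowLen] at this
    omega
  -- hook values
  have hYrow : ∀ j < cc, (hook Y (r, j) : ℤ) = (cc : ℤ) - j + Y.colLen j - r - 1 := by
    intro j hj
    have h1 := hLrow j hj
    show ((Y.rowLen r + Y.colLen j - r - j - 1 : ℕ) : ℤ) = _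
    push_cast [show r + j + 1 ≤ Y.rowLen r + Y.colLen j by omega]
    omega
  have hZrow : ∀ j < cc, (hook Z (r, j) : ℤ) = (cc : ℤ) - j + Y.colLen j - r := by
    intro j hj
    have h1 := hLrow j hj
    show ((Z.rowLen r + Z.colLen j - r - j - 1 : ℕ) : ℤ) = _
    rw [zRow, zCol, if_pos rfl, if_neg (by omega)]
    push_cast [show r + j + 1 ≤ cc + 1 + Y.colLen j by omega]
    omega
  have hYcol : ∀ i < r, (hook Y (i, cc) : ℤ) = (r : ℤ) - i + Y.rowLen i - cc - 1 := by
    intro i hi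
    have h1 := hRcol i hi
    show ((Y.rowLen i + Y.colLen cc - i - cc - 1 : ℕ) : ℤ) = _
    push_cast [show i + cc + 1 ≤ Y.rowLen i + Y.colLen cc by omega]
    omega
  have hZcol : ∀ i < r, (hook Z (i, cc) : ℤ) = (r : ℤ) - i + Y.rowLen i - cc := by
    intro i hi
    have h1 := hRcol i hi
    show ((Z.rowLen i + Z.colLen cc - i - cc - 1 : ℕ) : ℤ) = _
    rw [zRow, zCol, if_neg (by omega), if_pos rfl]
    push_cast [show i + cc + 1 ≤ Y.rowLen i + (r + 1) by omega]
    omega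
  have hZrest : ∀ c ∈ Y.cells, c.1 ≠ r → c.2 ≠ cc → hook Z c = hook Y c := by
    intro c _ h1 h2
    show Z.rowLen c.1 + Z.colLen c.2 - c.1 - c.2 - 1 = _
    rw [zRow, zCol, if_neg h1, if_neg h2]
    rfl
  have hZnew : hook Z (r, cc) = 1 := by
    show Z.rowLen r + Z.colLen cc - r - cc - 1 = 1
    rw [zRow, zCol, if_pos rfl, if_pos rfl]
    omega
  have hookY_pos : ∀ c ∈ Y.cells, 1 ≤ hook Y c := by
    intro c hc
    rw [mem_cells] at hc
    have h1 : c.2 < Y.rowLen c.1 := mem_iff_lt_rowLen.1 (show (c.1, c.2) ∈ Y from hc)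
    have h2 : c.1 < Y.colLen c.2 := mem_iff_lt_colLen.1 (show (c.1, c.2) ∈ Y from hc)
    show 1 ≤ Y.rowLen c.1 + Y.colLen c.2 - c.1 - c.2 - 1
    omega
  -- set decompositions
  have hP1 : Y.cells.filter (fun c => c.1 = r) = (Finset.range cc).image (fun j => (r, j)) := by
    ext ⟨p, q⟩
    simp only [Finset.mem_filter, Finset.mem_image, Finset.mem_range, mem_cells]
    constructor
    · rintro ⟨hpq, hp⟩
      subst hp
      have := mem_iff_lt_rowLen.1 (show (r, q) ∈ Y from hpq)
      exact ⟨q, by omega, rfl⟩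
    · rintro ⟨j, hj, hjq⟩
      rw [Prod.mk.injEq] at hjq
      obtain ⟨h1, h2⟩ := hjq
      subst h1; subst h2
      exact ⟨mem_iff_lt_rowLen.2 (by omega), rfl⟩
  have hP2 : (Y.cells.filter (fun c => ¬ c.1 = r)).filter (fun c => c.2 = cc) =
      (Finset.range r).image (fun i => (i, cc)) := by
    ext ⟨p, q⟩
    simp only [Finset.mem_filter, Finset.mem_image, Finset.mem_range, mem_cells]
    constructor
    · rintro ⟨⟨hpq, hp⟩, hq⟩
      subst hq
      have := mem_iff_lt_colLen.1 (show (p, cc) ∈ Y from hpq)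
      exact ⟨p, by omega, rfl⟩
    · rintro ⟨i, hi, hiq⟩
      rw [Prod.mk.injEq] at hiq
      obtain ⟨h1, h2⟩ := hiq
      subst h1; subst h2
      exact ⟨⟨mem_iff_lt_colLen.2 (by omega), by omega⟩, rfl⟩
  have hP3 : (Y.cells.filter (fun c => ¬ c.1 = r)).filter (fun c => ¬ c.2 = cc) =
      Y.cells.filter (fun c => c.1 ≠ r ∧ c.2 ≠ cc) := by
    rw [Finset.filter_filter]
  -- the six products
  set A := ∏ j ∈ Finset.range cc, w (hook Y (r, j)) with hA_def
  set A' := ∏ j ∈ Finset.range cc, w ((cc : ℤ) - j + Y.colLen j - r) with hA'_def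
  set B := ∏ i ∈ Finset.range r, w (hook Y (i, cc)) with hB_def
  set B' := ∏ i ∈ Finset.range r, w ((r : ℤ) - i + Y.rowLen i - cc) with hB'_def
  set C := ∏ c ∈ Y.cells.filter (fun c => c.1 ≠ r ∧ c.2 ≠ cc), w (hook Y c) with hC_def
  have hsplitY : ∀ F : ℕ × ℕ → RatFunc ℚ, ∏ c ∈ Y.cells, F c =
      (∏ j ∈ Finset.range cc, F (r, j)) * ((∏ i ∈ Finset.range r, F (i, cc)) *
        ∏ c ∈ Y.cells.filter (fun c => c.1 ≠ r ∧ c.2 ≠ cc), F c) := by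
    intro F
    rw [← Finset.prod_filter_mul_prod_filter_not Y.cells (fun c => c.1 = r) F,
      ← Finset.prod_filter_mul_prod_filter_not (Y.cells.filter (fun c => ¬ c.1 = r))
        (fun c => c.2 = cc) F, hP1, hP2, hP3,
      Finset.prod_image (by intro a _ b _ hab; exact (Prod.mk.injEq .. ▸ hab).2),
      Finset.prod_image (by intro a _ b _ hab; exact (Prod.mk.injEq .. ▸ hab).1)]
  have hwDY : wD Y = A * (B * C) := hsplitY _
  have hprodZ : ∏ c ∈ Y.cells, w (hook Z c) = A' * (B' * C) := by
    rw [hsplitY (fun c => w (hook Z c))]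
    congr 1
    · refine Finset.prod_congr rfl fun j hj => ?_
      rw [Finset.mem_range] at hj
      rw [hZrow j hj]
    congr 1
    · refine Finset.prod_congr rfl fun i hi => ?_
      rw [Finset.mem_range] at hi
      rw [hZcol i hi]
    · refine Finset.prod_congr rfl fun c hc => ?_
      rw [Finset.mem_filter] at hc
      rw [hZrest c hc.1 hc.2.1 hc.2.2]
  have hwDZ : wD Z = w 1 * (A' * (B' * C)) := by
    rw [wD, hZ, Finset.prod_insert (fun h => hMknotY ((mem_cells _).1 h)), ← hprodZ]
    congr 1
    have : hook Z (M k) = 1 := hZnew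
    rw [this]
    norm_num
  -- nonvanishing
  have hxk : x k = (cc : ℤ) - r := by rw [hx]
  have hAne : A ≠ 0 := by
    rw [hA_def, Finset.prod_ne_zero_iff]
    intro j hj
    rw [Finset.mem_range] at hj
    apply w_ne_zero
    rw [hYrow j hj]
    have := hLrow j hj
    omega
  have hBne : B ≠ 0 := by
    rw [hB_def, Finset.prod_ne_zero_iff]
    intro i hi
    rw [Finset.mem_range] at hi
    apply w_ne_zero
    rw [hYcol i hi]
    have := hRcol i hi
    omega
  have hCne : C ≠ 0 := by
    rw [hC_def, Finset.prod_ne_zero_iff]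
    intro c hc
    rw [Finset.mem_filter] at hc
    apply w_ne_zero
    have := hookY_pos c hc.1
    omega
  have hw1ne : w 1 ≠ 0 := w_ne_zero one_ne_zero
  -- reduce to the two telescoping facts
  have hmain : wD Z / (wD Y * w 1) = (B' / B) * (A' / A) := by
    rw [hwDZ, hwDY]
    field_simp
  rw [hmain]
  -- row-side numerator bijection
  have hrownum : ∏ j ∈ (Finset.range cc).filter (fun j => j = 0 ∨ Y.colLen j < Y.colLen (j - 1)),
      w ((cc : ℤ) - j + Y.colLen j - r) =
      ∏ i ∈ Finset.univ.filter (fun i : Fin d => k < i), w (x k - x i) := by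
    symm
    refine Finset.prod_bij (fun i _ => (M i).2) ?_ ?_ ?_ ?_
    · intro i hi
      show (M i).2 ∈ (Finset.range cc).filter (fun j => j = 0 ∨ Y.colLen j < Y.colLen (j - 1))
      rw [Finset.mem_filter] at hi
      have hki : k < i := hi.2
      have hrow : r < (M i).1 := hMmono hki
      obtain ⟨ho1, ho2⟩ := hMouter i
      have hle : Y.rowLen (M i).1 ≤ Y.rowLen r := Y.rowLen_anti _ _ (le_of_lt hrow)
      have hlt : (M i).2 < cc := by
        rcases Nat.lt_or_ge (M i).2 cc with h | h
        · exact h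
        · exfalso
          have h1 : (M i).2 = cc := by omega
          rw [h1] at ho2
          omega
      rw [Finset.mem_filter, Finset.mem_range]
      refine ⟨hlt, ?_⟩
      rcases Nat.eq_zero_or_pos (M i).2 with h0 | h0
      · left; exact h0
      · right
        have hmem : ((M i).1, (M i).2 - 1) ∈ Y := by
          rw [mem_iff_lt_rowLen]; omega
        rw [mem_iff_lt_colLen] at hmem
        omega
    · intro a _ b _ hab
      apply hMmono.injective
      have h1 := (hMouter a).2
      have h2 := (hMouter b).2
      show (M a).1 = (M b).1
      rw [h1, h2, hab]
    · intro j hj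
      rw [Finset.mem_filter, Finset.mem_range] at hj
      obtain ⟨hjcc, hj2⟩ := hj
      have hLj : r + 1 ≤ Y.colLen j := hLrow j hjcc
      have hcorner : ∃ i, M i = (Y.colLen j, j) := by
        apply hMsurj
        · -- j = rowLen (colLen j)
          show j = Y.rowLen (Y.colLen j)
          have hub : Y.rowLen (Y.colLen j) ≤ j := by
            have : ((Y.colLen j, j) : ℕ × ℕ) ∉ Y := by
              rw [mem_iff_lt_colLen]; omega
            rw [mem_iff_lt_rowLen] at this; omega
          rcases hj2 with h0 | h0
          · omega
          · have : ((Y.colLen j, j - 1) : ℕ × ℕ) ∈ Y := by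
              rw [mem_iff_lt_colLen]; omega
            rw [mem_iff_lt_rowLen] at this
            rcases Nat.eq_zero_or_pos j with h1 | h1
            · omega
            · omega
        · rfl
      obtain ⟨i, hi⟩ := hcorner
      have hrowi : (M i).1 = Y.colLen j := by rw [hi]
      have hcoli : (M i).2 = j := by rw [hi]
      refine ⟨i, ?_, hcoli⟩
      rw [Finset.mem_filter]
      refine ⟨Finset.mem_univ _, ?_⟩
      have : (M k).1 < (M i).1 := by omega
      exact hMmono.lt_iff_lt.1 this
    · intro i hi
      rw [Finset.mem_filter] at hi
      congr 1
      rw [hxk, hx i, (hMouter i).2]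
      push_cast
      ring
  -- row-side denominator bijection
  have hrowden : ∏ j ∈ (Finset.Icc 1 cc).filter (fun j => Y.colLen j < Y.colLen (j - 1)),
      w ((cc : ℤ) - j + Y.colLen (j - 1) - r) =
      ∏ i ∈ Finset.univ.filter (fun i : Fin (d - 1) => (k : ℕ) ≤ (i : ℕ)), w (x k - y i) := by
    symm
    refine Finset.prod_bij (fun i _ => (N i).2 + 1) ?_ ?_ ?_ ?_
    · intro i hi
      show (N i).2 + 1 ∈ (Finset.Icc 1 cc).filter (fun j => Y.colLen j < Y.colLen (j - 1))
      rw [Finset.mem_filter] at hi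
      have hri : r ≤ (N i).1 := (hNge i).1 hi.2
      obtain ⟨hn1, hn2⟩ := hNinner i
      have hle : Y.rowLen (N i).1 ≤ Y.rowLen r := Y.rowLen_anti _ _ hri
      rw [Finset.mem_filter, Finset.mem_Icc]
      refine ⟨⟨by omega, by omega⟩, ?_⟩
      have h1 : (N i).2 + 1 - 1 = (N i).2 := by omega
      rw [h1]
      have h2 : Y.colLen ((N i).2 + 1) ≤ (N i).1 := by
        have : ((N i).1, (N i).2 + 1) ∉ Y := by
          rw [mem_iff_lt_rowLen]; omega
        rw [mem_iff_lt_colLen] at this; omega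
      omega
    · intro a _ b _ hab
      apply hNmono.injective
      have h1 := (hNinner a).2
      have h2 := (hNinner b).2
      show (N a).1 = (N b).1
      have h3 : (N a).2 = (N b).2 := by omega
      rw [h3] at h1
      omega
    · intro j hj
      rw [Finset.mem_filter, Finset.mem_Icc] at hj
      obtain ⟨⟨hj1, hj2⟩, hj3⟩ := hj
      have hLj : r + 1 ≤ Y.colLen (j - 1) := hLrow (j - 1) (by omega)
      have hcorner : ∃ i, N i = (Y.colLen (j - 1) - 1, j - 1) := by
        apply hNsurj
        · show (j - 1) + 1 = Y.rowLen (Y.colLen (j - 1) - 1)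
          have hub : Y.rowLen (Y.colLen (j - 1) - 1) ≤ j := by
            have : ((Y.colLen (j - 1) - 1, j) : ℕ × ℕ) ∉ Y := by
              rw [mem_iff_lt_colLen]; omega
            rw [mem_iff_lt_rowLen] at this; omega
          have hlb : j - 1 < Y.rowLen (Y.colLen (j - 1) - 1) := by
            have : ((Y.colLen (j - 1) - 1, j - 1) : ℕ × ℕ) ∈ Y := by
              rw [mem_iff_lt_colLen]; omega
            rw [mem_iff_lt_rowLen] at this; exact this
          omega
        · show (Y.colLen (j - 1) - 1) + 1 = Y.colLen (j - 1)
          omega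
      obtain ⟨i, hi⟩ := hcorner
      have hrowi : (N i).1 = Y.colLen (j - 1) - 1 := by rw [hi]
      have hcoli : (N i).2 = j - 1 := by rw [hi]
      refine ⟨i, ?_, by omega⟩
      rw [Finset.mem_filter]
      exact ⟨Finset.mem_univ _, (hNge i).2 (by omega)⟩
    · intro i hi
      rw [Finset.mem_filter] at hi
      obtain ⟨hn1, hn2⟩ := hNinner i
      congr 1
      rw [hxk, hy i]
      have h1 : (N i).2 + 1 - 1 = (N i).2 := by omega
      rw [h1, ← hn2]
      push_cast
      ring
  -- column-side numerator bijection
  have hcolnum : ∏ j ∈ (Finset.range r).filter (fun j => j = 0 ∨ Y.rowLen j < Y.rowLen (j - 1)),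
      w ((r : ℤ) - j + Y.rowLen j - cc) =
      ∏ i ∈ Finset.univ.filter (fun i : Fin d => i < k), w (x i - x k) := by
    symm
    refine Finset.prod_bij (fun i _ => (M i).1) ?_ ?_ ?_ ?_
    · intro i hi
      show (M i).1 ∈ (Finset.range r).filter (fun j => j = 0 ∨ Y.rowLen j < Y.rowLen (j - 1))
      rw [Finset.mem_filter] at hi
      have hik : i < k := hi.2
      have hrow : (M i).1 < r := hMmono hik
      obtain ⟨ho1, ho2⟩ := hMouter i
      rw [Finset.mem_filter, Finset.mem_range]
      refine ⟨hrow, ?_⟩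
      rcases Nat.eq_zero_or_pos (M i).1 with h0 | h0
      · left; exact h0
      · right
        have hmem : ((M i).1 - 1, (M i).2) ∈ Y := by
          rw [mem_iff_lt_colLen]; omega
        rw [mem_iff_lt_rowLen] at hmem
        omega
    · intro a _ b _ hab
      exact hMmono.injective hab
    · intro j hj
      rw [Finset.mem_filter, Finset.mem_range] at hj
      obtain ⟨hjr, hj2⟩ := hj
      have hRj : cc + 1 ≤ Y.rowLen j := hRcol j hjr
      have hcorner : ∃ i, M i = (j, Y.rowLen j) := by
        apply hMsurj
        · rfl
        · show j = Y.colLen (Y.rowLen j)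
          have hub : Y.colLen (Y.rowLen j) ≤ j := by
            have : ((j, Y.rowLen j) : ℕ × ℕ) ∉ Y := by
              rw [mem_iff_lt_rowLen]; omega
            rw [mem_iff_lt_colLen] at this; omega
          rcases hj2 with h0 | h0
          · omega
          · have : ((j - 1, Y.rowLen j) : ℕ × ℕ) ∈ Y := by
              rw [mem_iff_lt_rowLen]; omega
            rw [mem_iff_lt_colLen] at this
            omega
      obtain ⟨i, hi⟩ := hcorner
      have hrowi : (M i).1 = j := by rw [hi]
      have hcoli : (M i).2 = Y.rowLen j := by rw [hi]
      refine ⟨i, ?_, hrowi⟩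
      rw [Finset.mem_filter]
      refine ⟨Finset.mem_univ _, ?_⟩
      have : (M i).1 < (M k).1 := by omega
      exact hMmono.lt_iff_lt.1 this
    · intro i hi
      rw [Finset.mem_filter] at hi
      congr 1
      rw [hxk, hx i, (hMouter i).1]
      push_cast
      ring
  -- column-side denominator bijection
  have hcolden : ∏ j ∈ (Finset.Icc 1 r).filter (fun j => Y.rowLen j < Y.rowLen (j - 1)),
      w ((r : ℤ) - j + Y.rowLen (j - 1) - cc) =
      ∏ i ∈ Finset.univ.filter (fun i : Fin (d - 1) => (i : ℕ) < (k : ℕ)), w (y i - x k) := by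
    symm
    refine Finset.prod_bij (fun i _ => (N i).1 + 1) ?_ ?_ ?_ ?_
    · intro i hi
      show (N i).1 + 1 ∈ (Finset.Icc 1 r).filter (fun j => Y.rowLen j < Y.rowLen (j - 1))
      rw [Finset.mem_filter] at hi
      have hri : (N i).1 < r := by
        by_contra hcon
        push_neg at hcon
        have := (hNge i).2 hcon
        omega
      obtain ⟨hn1, hn2⟩ := hNinner i
      rw [Finset.mem_filter, Finset.mem_Icc]
      refine ⟨⟨by omega, by omega⟩, ?_⟩
      have h1 : (N i).1 + 1 - 1 = (N i).1 := by omega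
      rw [h1]
      have h2 : Y.rowLen ((N i).1 + 1) ≤ (N i).2 := by
        have : ((N i).1 + 1, (N i).2) ∉ Y := by
          rw [mem_iff_lt_colLen]; omega
        rw [mem_iff_lt_rowLen] at this; omega
      omega
    · intro a _ b _ hab
      apply hNmono.injective
      show (N a).1 = (N b).1
      omega
    · intro j hj
      rw [Finset.mem_filter, Finset.mem_Icc] at hj
      obtain ⟨⟨hj1, hj2⟩, hj3⟩ := hj
      have hRj : cc + 1 ≤ Y.rowLen (j - 1) := hRcol (j - 1) (by omega)
      have hcorner : ∃ i, N i = (j - 1, Y.rowLen (j - 1) - 1) := by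
        apply hNsurj
        · show (Y.rowLen (j - 1) - 1) + 1 = Y.rowLen (j - 1)
          omega
        · show (j - 1) + 1 = Y.colLen (Y.rowLen (j - 1) - 1)
          have hub : Y.colLen (Y.rowLen (j - 1) - 1) ≤ j := by
            have : ((j, Y.rowLen (j - 1) - 1) : ℕ × ℕ) ∉ Y := by
              rw [mem_iff_lt_rowLen]; omega
            rw [mem_iff_lt_colLen] at this; omega
          have hlb : j - 1 < Y.colLen (Y.rowLen (j - 1) - 1) := by
            have : ((j - 1, Y.rowLen (j - 1) - 1) : ℕ × ℕ) ∈ Y := by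
              rw [mem_iff_lt_rowLen]; omega
            rw [mem_iff_lt_colLen] at this; exact this
          omega
      obtain ⟨i, hi⟩ := hcorner
      have hrowi : (N i).1 = j - 1 := by rw [hi]
      have hcoli : (N i).2 = Y.rowLen (j - 1) - 1 := by rw [hi]
      refine ⟨i, ?_, by omega⟩
      rw [Finset.mem_filter]
      refine ⟨Finset.mem_univ _, ?_⟩
      by_contra hcon
      push_neg at hcon
      have := (hNge i).1 hcon
      omega
    · intro i hi
      rw [Finset.mem_filter] at hi
      obtain ⟨hn1, hn2⟩ := hNinner i
      congr 1
      rw [hxk, hy i]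
      have h1 : (N i).1 + 1 - 1 = (N i).1 := by omega
      rw [h1, ← hn1]
      push_cast
      ring
  -- the two telescoped ratios
  have hAA : A' / A = (∏ i ∈ Finset.univ.filter (fun i : Fin d => k < i), w (x k - x i)) /
      ∏ i ∈ Finset.univ.filter (fun i : Fin (d - 1) => (k : ℕ) ≤ (i : ℕ)), w (x k - y i) := by
    have h1 : A = ∏ j ∈ Finset.range cc, w ((cc : ℤ) - j + Y.colLen j - r - 1) := by
      rw [hA_def]
      refine Finset.prod_congr rfl fun j hj => ?_
      rw [Finset.mem_range] at hj
      rw [hYrow j hj]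
    rw [h1, hA'_def, ← Finset.prod_div_distrib,
      telescope Y.colLen (fun h => Y.colLen_anti _ _ h) cc r hLrow hccr.symm,
      hrownum, hrowden]
  have hBB : B' / B = (∏ i ∈ Finset.univ.filter (fun i : Fin d => i < k), w (x i - x k)) /
      ∏ i ∈ Finset.univ.filter (fun i : Fin (d - 1) => (i : ℕ) < (k : ℕ)), w (y i - x k) := by
    have h1 : B = ∏ i ∈ Finset.range r, w ((r : ℤ) - i + Y.rowLen i - cc - 1) := by
      rw [hB_def]
      refine Finset.prod_congr rfl fun i hi => ?_
      rw [Finset.mem_range] at hi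
      rw [hYcol i hi]
    rw [h1, hB'_def, ← Finset.prod_div_distrib,
      telescope Y.rowLen (fun h => Y.rowLen_anti _ _ h) r cc hRcol hrcc.symm,
      hcolnum, hcolden]
  rw [hAA, hBB]
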